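/- Let G be a connected bipartite graph with color classes E and V. A set of edges T of G forms a spanning tree of G if and only if the corresponding set of vertices {𝐞 + 𝐯 : ev ∈ T} of the root polytope Q_G is affinely independent and spans the affine hull of Q_G (i.e., is the vertex set of a maximal-dimensional simplex contained in Q_G). -/

import Mathlib

open scoped Classical

set_option linter.unusedSectionVars false
set_option maxHeartbeats 1000000

/-- The bipartite graph on vertex set `E ⊕ V` determined by a set of edges
`edges ⊆ E × V` (each pair `(e, v)` is an edge `ev`). -/
def biGraph {E V : Type} (edges : Set (E × V)) : SimpleGraph (E ⊕ V) :=
  SimpleGraph.fromRel (fun a b => ∃ p ∈ edges, a = Sum.inl p.1 ∧ b = Sum.inr p.2)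

/-- The point `𝐞 + 𝐯` of `ℝ^E ⊕ ℝ^V` corresponding to an edge `ev`. -/
noncomputable def rootPt (E V : Type) (p : E × V) : (E → ℝ) × (V → ℝ) :=
  (Pi.single p.1 1, Pi.single p.2 1)

/-- The root polytope of the bipartite graph with edge set `edges`. -/
noncomputable def rootPolytope {E V : Type} (edges : Set (E × V)) :
    Set ((E → ℝ) × (V → ℝ)) :=
  convexHull ℝ (rootPt E V '' edges)

section Aux

variable {E V : Type} [Fintype E] [Fintype V]

/-- The vector `𝐞` or `𝐯` corresponding to a single vertex of the bipartite graph. -/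
noncomputable def Jf (E V : Type) : E ⊕ V → (E → ℝ) × (V → ℝ) :=
  Sum.elim (fun e => (Pi.single e 1, 0)) (fun v => (0, Pi.single v 1))

/-- Sign of a vertex: `+1` on the color class `E`, `-1` on `V`. -/
def sg (E V : Type) : E ⊕ V → ℝ := Sum.elim (fun _ => 1) (fun _ => -1)

lemma sg_mul_self (a : E ⊕ V) : sg E V a * sg E V a = 1 := by
  cases a <;> simp [sg]

lemma jf_pair (q : E × V) :
    Jf E V (Sum.inl q.1) + Jf E V (Sum.inr q.2) = rootPt E V q := by
  simp [Jf, rootPt, Prod.ext_iff]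

lemma biGraph_adj {S : Set (E × V)} {x y : E ⊕ V} :
    (biGraph S).Adj x y ↔
      (∃ p ∈ S, x = Sum.inl p.1 ∧ y = Sum.inr p.2) ∨
      (∃ p ∈ S, y = Sum.inl p.1 ∧ x = Sum.inr p.2) := by
  constructor
  · rintro ⟨-, h⟩; exact h
  · rintro (⟨p, hp, rfl, rfl⟩ | ⟨p, hp, rfl, rfl⟩)
    · exact ⟨by simp, Or.inl ⟨p, hp, rfl, rfl⟩⟩
    · exact ⟨by simp, Or.inr ⟨p, hp, rfl, rfl⟩⟩

lemma biGraph_mono {S S' : Set (E × V)} (h : S ⊆ S') : biGraph S ≤ biGraph S' := by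
  intro x y hxy
  rw [biGraph_adj] at hxy ⊢
  rcases hxy with ⟨p, hp, h1, h2⟩ | ⟨p, hp, h1, h2⟩
  · exact Or.inl ⟨p, h hp, h1, h2⟩
  · exact Or.inr ⟨p, h hp, h1, h2⟩

lemma edgeSet_biGraph {S : Set (E × V)} {e : Sym2 (E ⊕ V)} :
    e ∈ (biGraph S).edgeSet ↔ ∃ q ∈ S, e = s(Sum.inl q.1, Sum.inr q.2) := by
  induction e using Sym2.inductionOn with
  | hf x y =>
    rw [SimpleGraph.mem_edgeSet, biGraph_adj]
    constructor
    · rintro (⟨p, hp, rfl, rfl⟩ | ⟨p, hp, rfl, rfl⟩)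
      · exact ⟨p, hp, rfl⟩
      · exact ⟨p, hp, Sym2.eq_swap⟩
    · rintro ⟨q, hq, he⟩
      rw [Sym2.eq_iff] at he
      rcases he with ⟨rfl, rfl⟩ | ⟨rfl, rfl⟩
      · exact Or.inl ⟨q, hq, rfl, rfl⟩
      · exact Or.inr ⟨q, hq, rfl, rfl⟩

lemma adj_step {S : Set (E × V)} {x y : E ⊕ V} (h : (biGraph S).Adj x y) :
    sg E V y = -sg E V x ∧ Jf E V x + Jf E V y ∈ rootPt E V '' S := by
  rw [biGraph_adj] at h
  rcases h with ⟨p, hp, rfl, rfl⟩ | ⟨p, hp, rfl, rfl⟩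
  · exact ⟨by simp [sg], ⟨p, hp, (jf_pair p).symm⟩⟩
  · refine ⟨by simp [sg], ⟨p, hp, ?_⟩⟩
    rw [← jf_pair p, add_comm]

/-- Key walk lemma: alternating sums along a walk. -/
lemma walk_span {S : Set (E × V)} {a b : E ⊕ V} (w : (biGraph S).Walk a b) :
    Jf E V a - (sg E V a * sg E V b) • Jf E V b
      ∈ Submodule.span ℝ (rootPt E V '' S) := by
  induction w with
  | nil => simp [sg_mul_self]
  | @cons a c b h w ih =>
    obtain ⟨hsg, hmem⟩ := adj_step h
    have h1 : Jf E V a + Jf E V c ∈ Submodule.span ℝ (rootPt E V '' S) :=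
      Submodule.subset_span hmem
    have := Submodule.sub_mem _ h1 ih
    rw [hsg] at this
    convert this using 1
    rw [neg_mul, neg_smul]
    abel

lemma reachable_rootPt_mem {S : Set (E × V)} {q : E × V}
    (h : (biGraph S).Reachable (Sum.inl q.1) (Sum.inr q.2)) :
    rootPt E V q ∈ Submodule.span ℝ (rootPt E V '' S) := by
  obtain ⟨w⟩ := h
  have hmem := walk_span w
  have hs : sg E V (Sum.inl q.1) * sg E V (Sum.inr q.2) = -1 := by simp [sg]
  rwa [hs, neg_one_smul, sub_neg_eq_add, jf_pair] at hmem

/-- The linear functional determined by a set of vertices `C`: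
sum of the `E`-coordinates over `C` minus the sum of `V`-coordinates over `C`. -/
noncomputable def phiC (C : Set (E ⊕ V)) : ((E → ℝ) × (V → ℝ)) →ₗ[ℝ] ℝ :=
  (∑ e : E, if Sum.inl e ∈ C then
      (LinearMap.proj e).comp (LinearMap.fst ℝ (E → ℝ) (V → ℝ)) else 0)
  - ∑ v : V, if Sum.inr v ∈ C then
      (LinearMap.proj v).comp (LinearMap.snd ℝ (E → ℝ) (V → ℝ)) else 0

lemma phiC_rootPt (C : Set (E ⊕ V)) (q : E × V) :
    phiC C (rootPt E V q) =
      (if Sum.inl q.1 ∈ C then (1:ℝ) else 0) -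
      (if Sum.inr q.2 ∈ C then (1:ℝ) else 0) := by
  have h1 : ∀ e : E, ((if Sum.inl e ∈ C then
      (LinearMap.proj e).comp (LinearMap.fst ℝ (E → ℝ) (V → ℝ)) else 0) (rootPt E V q))
      = if e = q.1 then (if Sum.inl q.1 ∈ C then (1:ℝ) else 0) else 0 := by
    intro e
    by_cases h1 : e = q.1 <;> by_cases h2 : Sum.inl e ∈ C <;>
      simp_all [rootPt, Pi.single_apply]
  have h2 : ∀ v : V, ((if Sum.inr v ∈ C then
      (LinearMap.proj v).comp (LinearMap.snd ℝ (E → ℝ) (V → ℝ)) else 0) (rootPt E V q))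
      = if v = q.2 then (if Sum.inr q.2 ∈ C then (1:ℝ) else 0) else 0 := by
    intro v
    by_cases h1 : v = q.2 <;> by_cases h2 : Sum.inr v ∈ C <;>
      simp_all [rootPt, Pi.single_apply]
  simp only [phiC, LinearMap.sub_apply, LinearMap.sum_apply]
  rw [Finset.sum_congr rfl (fun e _ => h1 e), Finset.sum_congr rfl (fun v _ => h2 v),
    Finset.sum_ite_eq' Finset.univ q.1, Finset.sum_ite_eq' Finset.univ q.2]
  simp

lemma fE_rootPt (q : E × V) :
    phiC (Set.range (Sum.inl : E → E ⊕ V)) (rootPt E V q) = 1 := by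
  rw [phiC_rootPt]; simp

lemma phiC_vanish {S : Set (E × V)} {C : Set (E ⊕ V)}
    (hC : ∀ {x y : E ⊕ V}, (biGraph S).Adj x y → (x ∈ C ↔ y ∈ C)) :
    ∀ q ∈ S, phiC C (rootPt E V q) = 0 := by
  intro q hq
  have hadj : (biGraph S).Adj (Sum.inl q.1) (Sum.inr q.2) :=
    biGraph_adj.2 (Or.inl ⟨q, hq, rfl, rfl⟩)
  have hiff := hC hadj
  rw [phiC_rootPt]
  by_cases h : Sum.inl q.1 ∈ C
  · rw [if_pos h, if_pos (hiff.1 h)]; ring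
  · rw [if_neg h, if_neg (fun hh => h (hiff.2 hh))]; ring

lemma span_le_ker_phiC {S : Set (E × V)} {C : Set (E ⊕ V)}
    (hC : ∀ {x y : E ⊕ V}, (biGraph S).Adj x y → (x ∈ C ↔ y ∈ C)) :
    Submodule.span ℝ (rootPt E V '' S) ≤ LinearMap.ker (phiC C) := by
  rw [Submodule.span_le]
  rintro - ⟨q, hq, rfl⟩
  exact phiC_vanish hC q hq

lemma reach_closed {S : Set (E × V)} {a x y : E ⊕ V}
    (h : (biGraph S).Adj x y) :
    ((biGraph S).Reachable a x ↔ (biGraph S).Reachable a y) :=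
  ⟨fun hx => hx.trans h.reachable, fun hy => hy.trans h.symm.reachable⟩

lemma exists_crossing {α : Type*} {G : SimpleGraph α} {C : Set α} {a b : α}
    (w : G.Walk a b) : a ∈ C → b ∉ C → ∃ x y, G.Adj x y ∧ x ∈ C ∧ y ∉ C := by
  induction w with
  | nil => intro ha hb; exact absurd ha hb
  | @cons u v b h w ih =>
    intro ha hb
    by_cases hv : v ∈ C
    · exact ih hv hb
    · exact ⟨u, v, h, ha, hv⟩

lemma vectorSpan_le_ker {W : Type*} [AddCommGroup W] [Module ℝ W]
    {s : Set W} (f : W →ₗ[ℝ] ℝ) (hall : ∀ x ∈ s, f x = 1) :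
    vectorSpan ℝ s ≤ LinearMap.ker f := by
  rw [vectorSpan_def, Submodule.span_le]
  rintro - ⟨u, hu, v, hv, rfl⟩
  simp [LinearMap.mem_ker, vsub_eq_sub, hall u hu, hall v hv]

lemma mem_vectorSpan_of_mem_span {W : Type*} [AddCommGroup W] [Module ℝ W]
    {s : Set W} (f : W →ₗ[ℝ] ℝ) (hall : ∀ x ∈ s, f x = 1)
    {p0 : W} (hp0 : p0 ∈ s) {w : W}
    (hw : w ∈ Submodule.span ℝ s) (h0 : f w = 0) : w ∈ vectorSpan ℝ s := by
  have hle : Submodule.span ℝ s ≤ vectorSpan ℝ s ⊔ Submodule.span ℝ {p0} := by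
    rw [Submodule.span_le]
    intro x hx
    have hxv : x - p0 ∈ vectorSpan ℝ s := vsub_mem_vectorSpan ℝ hx hp0
    have hx' : x = (x - p0) + p0 := by abel
    rw [hx']
    exact Submodule.add_mem_sup hxv (Submodule.mem_span_singleton_self p0)
  rcases Submodule.mem_sup.1 (hle hw) with ⟨v, hv, z, hz, rfl⟩
  rcases Submodule.mem_span_singleton.1 hz with ⟨c, rfl⟩
  have hfv : f v = 0 := vectorSpan_le_ker f hall hv
  have hc : c = 0 := by
    have h0' := h0
    rw [map_add, hfv, zero_add, map_smul, hall p0 hp0, smul_eq_mul, mul_one] at h0'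
    exact h0'
  simp [hc, hv]

lemma affineIndependent_iff_linearIndependent {ι : Type*} [Fintype ι]
    {W : Type*} [AddCommGroup W] [Module ℝ W] (f : W →ₗ[ℝ] ℝ) (p : ι → W)
    (hf : ∀ i, f (p i) = 1) :
    AffineIndependent ℝ p ↔ LinearIndependent ℝ p := by
  constructor
  · intro h
    rw [Fintype.linearIndependent_iff]
    intro g hg i
    have hsum : Finset.univ.sum g = 0 := by
      have h' := congrArg f hg
      rw [map_sum, map_zero] at h'
      simpa [hf] using h'
    exact affineIndependent_iff.1 h Finset.univ g hsum hg i (Finset.mem_univ i)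
  · intro h
    rw [affineIndependent_iff]
    intro s w _ hw1 e he
    exact linearIndependent_iff'.1 h s w hw1 e he

end Aux

/-- Let `G` be a connected bipartite graph with color classes
`E` and `V`.  A set `T` of edges of `G` forms a spanning tree of `G` if and
only if the corresponding set of vertices `{𝐞 + 𝐯 : ev ∈ T}` of the root
polytope `Q_G` is affinely independent and spans the affine hull of `Q_G`
(i.e., it is the vertex set of a maximal-dimensional simplex in `Q_G`). -/
theorem spanning_tree_iff_maximal_simplex {E V : Type} [Fintype E] [Fintype V]
    (edges : Set (E × V)) (hconn : (biGraph edges).Connected)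
    (T : Set (E × V)) (hT : T ⊆ edges) :
    (biGraph T).IsTree ↔
      (AffineIndependent ℝ (fun p : T => rootPt E V p) ∧
        affineSpan ℝ (rootPt E V '' T) = affineSpan ℝ (rootPt E V '' edges)) := by
  have hfE : ∀ q : E × V, phiC (Set.range (Sum.inl : E → E ⊕ V)) (rootPt E V q) = 1 :=
    fE_rootPt
  constructor
  · intro htree
    have hTc := htree.isConnected
    have hTa := htree.IsAcyclic
    have hlin : LinearIndependent ℝ (fun p : T => rootPt E V ↑p) := by
      rw [Fintype.linearIndependent_iff]
      intro g hg p0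
      set q0 : E × V := ↑p0 with hq0
      have hq0T : q0 ∈ T := p0.2
      set S : Set (E × V) := T \ {q0} with hS
      set C : Set (E ⊕ V) := {x | (biGraph S).Reachable (Sum.inl q0.1) x} with hC
      have hnotC : Sum.inr q0.2 ∉ C := by
        intro hr
        obtain ⟨w⟩ := hr
        have hsub : ∀ e ∈ w.bypass.edges, e ∈ (biGraph T).edgeSet := fun e he =>
          SimpleGraph.edgeSet_mono (biGraph_mono Set.diff_subset)
            (w.bypass.edges_subset_edgeSet he)
        have hpath : (w.bypass.transfer (biGraph T) hsub).IsPath :=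
          (w.bypass_isPath).transfer hsub
        have hadj : (biGraph T).Adj (Sum.inl q0.1) (Sum.inr q0.2) :=
          biGraph_adj.2 (Or.inl ⟨q0, hq0T, rfl, rfl⟩)
        have hne : s(Sum.inl q0.1, Sum.inr q0.2)
            ∉ ((w.bypass.transfer (biGraph T) hsub).reverse).edges := by
          rw [SimpleGraph.Walk.edges_reverse, List.mem_reverse,
            SimpleGraph.Walk.edges_transfer]
          intro hmem
          have hmem' := w.bypass.edges_subset_edgeSet hmem
          rw [edgeSet_biGraph] at hmem'
          obtain ⟨r, hrS, hre⟩ := hmem'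
          rw [Sym2.eq_iff] at hre
          rcases hre with ⟨h1, h2⟩ | ⟨h1, h2⟩
          · have hr1 : q0.1 = r.1 := Sum.inl.inj h1
            have hr2 : q0.2 = r.2 := Sum.inr.inj h2
            exact hrS.2 (Prod.ext hr1.symm hr2.symm)
          · exact Sum.inl_ne_inr h1
        have hcyc : (SimpleGraph.Walk.cons hadj
            ((w.bypass.transfer (biGraph T) hsub).reverse)).IsCycle := by
          rw [SimpleGraph.Walk.cons_isCycle_iff]
          exact ⟨hpath.reverse, hne⟩
        exact hTa _ hcyc
      have hvan := phiC_vanish (S := S) (C := C)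
        (fun {x y} h => reach_closed (a := Sum.inl q0.1) h)
      have happ := congrArg (phiC C) hg
      rw [map_sum, map_zero] at happ
      simp only [map_smul, smul_eq_mul] at happ
      have hval : ∀ p : T, p ≠ p0 → g p * phiC C (rootPt E V ↑p) = 0 := by
        intro p hp
        have hpS : (↑p : E × V) ∈ S := ⟨p.2, fun hh => hp (Subtype.ext hh)⟩
        rw [hvan _ hpS, mul_zero]
      have hp0val : phiC C (rootPt E V q0) = 1 := by
        have h1 : Sum.inl q0.1 ∈ C := SimpleGraph.Reachable.refl _
        rw [phiC_rootPt, if_pos h1, if_neg hnotC]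
        ring
      rw [Fintype.sum_eq_single p0 hval] at happ
      rw [← hq0, hp0val, mul_one] at happ
      exact happ
    have haff : AffineIndependent ℝ (fun p : T => rootPt E V ↑p) :=
      (affineIndependent_iff_linearIndependent _ _ (fun i => hfE _)).2 hlin
    refine ⟨haff, ?_⟩
    apply le_antisymm (affineSpan_mono ℝ (Set.image_mono hT))
    rw [affineSpan_le]
    rintro - ⟨q, hq, rfl⟩
    have hr : (biGraph T).Reachable (Sum.inl q.1) (Sum.inr q.2) :=
      hTc.preconnected _ _
    have hmem' : rootPt E V q ∈ Submodule.span ℝ (rootPt E V '' T) :=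
      reachable_rootPt_mem hr
    rcases Set.eq_empty_or_nonempty T with hTe | ⟨t0, ht0⟩
    · exfalso
      rw [hTe] at hmem'
      simp only [Set.image_empty, Submodule.span_empty, Submodule.mem_bot] at hmem'
      have hz := congrArg (fun w => w.1 q.1) hmem'
      simp [rootPt] at hz
    · have ht0T : rootPt E V t0 ∈ rootPt E V '' T := ⟨t0, ht0, rfl⟩
      have hsub : rootPt E V q - rootPt E V t0 ∈ vectorSpan ℝ (rootPt E V '' T) := by
        apply mem_vectorSpan_of_mem_span (phiC (Set.range (Sum.inl : E → E ⊕ V)))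
          (fun x hx => by obtain ⟨r, _, rfl⟩ := hx; exact hfE r) ht0T
          (Submodule.sub_mem _ hmem' (Submodule.subset_span ht0T))
        rw [map_sub, hfE, hfE, sub_self]
      have ht0mem : rootPt E V t0 ∈ affineSpan ℝ (rootPt E V '' T) :=
        mem_affineSpan ℝ ht0T
      have hfin := AffineSubspace.vadd_mem_of_mem_direction
        (by rw [direction_affineSpan]; exact hsub) ht0mem
      have : (rootPt E V q - rootPt E V t0) +ᵥ rootPt E V t0 = rootPt E V q := by
        simp [vadd_eq_add]
      rwa [this] at hfin
  · rintro ⟨hindep, hspan⟩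
    have hlin : LinearIndependent ℝ (fun p : T => rootPt E V ↑p) :=
      (affineIndependent_iff_linearIndependent _ _ (fun i => hfE _)).1 hindep
    have hpre : (biGraph T).Preconnected := by
      intro a b
      by_contra hnr
      set C : Set (E ⊕ V) := {x | (biGraph T).Reachable a x} with hC
      have hb : b ∉ C := hnr
      obtain ⟨w⟩ := hconn.preconnected a b
      obtain ⟨x, y, hxy, hxC, hyC⟩ :=
        exists_crossing (C := C) w (SimpleGraph.Reachable.refl a) hb
      have hker := span_le_ker_phiC (S := T) (C := C)
        (fun {x y} h => reach_closed (a := a) h)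
      rw [biGraph_adj] at hxy
      have hmemq : ∀ q ∈ edges, rootPt E V q ∈ Submodule.span ℝ (rootPt E V '' T) := by
        intro q hq
        apply affineSpan_subset_span (k := ℝ)
        rw [hspan]
        exact mem_affineSpan ℝ ⟨q, hq, rfl⟩
      rcases hxy with ⟨q, hq, hx, hy⟩ | ⟨q, hq, hy, hx⟩
      · have h0 : phiC C (rootPt E V q) = 0 := hker (hmemq q hq)
        rw [phiC_rootPt, if_pos (hx ▸ hxC), if_neg (hy ▸ hyC)] at h0
        norm_num at h0
      · have h0 : phiC C (rootPt E V q) = 0 := hker (hmemq q hq)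
        rw [phiC_rootPt, if_neg (hy ▸ hyC), if_pos (hx ▸ hxC)] at h0
        norm_num at h0
    have hacyc : (biGraph T).IsAcyclic := by
      intro v c hc
      cases c with
      | nil => exact hc.ne_nil rfl
      | @cons _ c' _ h w =>
        have h2 := (SimpleGraph.Walk.cons_isCycle_iff w h).1 hc
        rcases biGraph_adj.1 h with ⟨q, hqT, hv, hc'⟩ | ⟨q, hqT, hc', hv⟩
        · -- v = inl q.1, c' = inr q.2
          subst hv; subst hc'
          have hsub : ∀ e ∈ w.edges, e ∈ (biGraph (T \ {q})).edgeSet := by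
            intro e he
            have heT := w.edges_subset_edgeSet he
            rw [edgeSet_biGraph] at heT
            rw [edgeSet_biGraph]
            obtain ⟨r, hrT, rfl⟩ := heT
            refine ⟨r, ⟨hrT, ?_⟩, rfl⟩
            rintro rfl
            exact h2.2 he
          have hreach : (biGraph (T \ {q})).Reachable (Sum.inl q.1) (Sum.inr q.2) :=
            ⟨(w.transfer _ hsub).reverse⟩
          have hmem' : rootPt E V q ∈ Submodule.span ℝ (rootPt E V '' (T \ {q})) :=
            reachable_rootPt_mem hreach
          have hni := hlin.notMem_span_image
            (s := {i : T | (↑i : E × V) ≠ q}) (x := ⟨q, hqT⟩) (by simp)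
          apply hni
          refine Submodule.span_mono ?_ hmem'
          rintro - ⟨r, ⟨hrT, hrq⟩, rfl⟩
          exact ⟨⟨r, hrT⟩, by simpa using hrq, rfl⟩
        · -- c' = inl q.1, v = inr q.2
          subst hv; subst hc'
          have hsub : ∀ e ∈ w.edges, e ∈ (biGraph (T \ {q})).edgeSet := by
            intro e he
            have heT := w.edges_subset_edgeSet he
            rw [edgeSet_biGraph] at heT
            rw [edgeSet_biGraph]
            obtain ⟨r, hrT, rfl⟩ := heT
            refine ⟨r, ⟨hrT, ?_⟩, rfl⟩
            rintro rfl
            exact h2.2 (by rw [Sym2.eq_swap] at he; exact he)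
          have hreach : (biGraph (T \ {q})).Reachable (Sum.inl q.1) (Sum.inr q.2) :=
            ⟨w.transfer _ hsub⟩
          have hmem' : rootPt E V q ∈ Submodule.span ℝ (rootPt E V '' (T \ {q})) :=
            reachable_rootPt_mem hreach
          have hni := hlin.notMem_span_image
            (s := {i : T | (↑i : E × V) ≠ q}) (x := ⟨q, hqT⟩) (by simp)
          apply hni
          refine Submodule.span_mono ?_ hmem'
          rintro - ⟨r, ⟨hrT, hrq⟩, rfl⟩
          exact ⟨⟨r, hrT⟩, by simpa using hrq, rfl⟩
    have hne : Nonempty (E ⊕ V) := hconn.nonempty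
    exact ⟨⟨hpre⟩, hacyc⟩
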